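/- The matrix I(m) - D(m), where D(m) has (i,j)-entry (-1)^{m-i}·C(i,j), is lower-triangular and has rank ⌊(m+1)/2⌋ over the rationals, and its eigenvalues are 0 and 2. -/

import Mathlib

open Matrix Finset

private lemma neg_one_pow_sub_q {m j : ℕ} (h : j ≤ m) :
    ((-1 : ℚ)) ^ (m - j) = (-1) ^ m * (-1) ^ j := by
  have h2 := pow_sub_mul_pow (-1 : ℚ) h
  have h3 : ((-1 : ℚ)) ^ j * (-1) ^ j = 1 := by
    rw [← mul_pow]; norm_num
  calc ((-1:ℚ))^(m-j) = (-1)^(m-j) * ((-1)^j * (-1)^j) := by rw [h3, mul_one]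
    _ = ((-1)^(m-j) * (-1)^j) * (-1)^j := by ring
    _ = (-1)^m * (-1)^j := by rw [h2]

private lemma alt_sum_q (n : ℕ) :
    ∑ t ∈ range (n+1), (-1:ℚ)^t * (n.choose t) = if n = 0 then 1 else 0 := by
  have h := Int.alternating_sum_range_choose (n := n)
  have h2 : ((∑ i ∈ range (n + 1), (-1:ℤ) ^ i * (n.choose i) : ℤ) : ℚ)
      = ∑ t ∈ range (n+1), (-1:ℚ)^t * (n.choose t) := by push_cast; rfl
  rw [← h2, h]
  split <;> simp

private lemma binom_inv (m i k : ℕ) (hi : i ≤ m) :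
    ∑ j ∈ range (m+1), ((-1:ℚ)^(m-i) * (i.choose j)) * ((-1:ℚ)^(m-j) * (j.choose k))
      = if i = k then 1 else 0 := by
  rcases lt_or_ge i k with hik | hki
  · rw [if_neg (by omega)]
    refine Finset.sum_eq_zero fun j hj => ?_
    rcases le_or_gt j i with hji | hij
    · have : j.choose k = 0 := Nat.choose_eq_zero_of_lt (lt_of_le_of_lt hji hik)
      simp [this]
    · have : i.choose j = 0 := Nat.choose_eq_zero_of_lt hij
      simp [this]
  · -- k ≤ i
    have hsub : Finset.Ico k (i+1) ⊆ range (m+1) := by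
      intro x hx; simp only [Finset.mem_Ico] at hx; simp; omega
    rw [← Finset.sum_subset hsub (fun j hj hj2 => ?_)]
    · rw [Finset.sum_Ico_eq_sum_range]
      have hrw : i + 1 - k = (i - k) + 1 := by omega
      rw [hrw]
      have hterm : ∀ t ∈ range ((i-k)+1),
          ((-1:ℚ)^(m-i) * (i.choose (k+t))) * ((-1:ℚ)^(m-(k+t)) * ((k+t).choose k))
          = ((-1:ℚ)^i * (-1)^k * (i.choose k)) * ((-1)^t * ((i-k).choose t)) := by
        intro t ht
        simp only [Finset.mem_range] at ht
        have hkt : k + t ≤ i := by omega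
        have hc := Nat.choose_mul (n := i) (k := k + t) (s := k) (Nat.le_add_right k t)
        have hc' : (i.choose (k+t) : ℚ) * ((k+t).choose k) = (i.choose k) * ((i-k).choose t) := by
          have : k + t - k = t := by omega
          rw [this] at hc; exact_mod_cast congrArg (Nat.cast : ℕ → ℚ) hc
        rw [neg_one_pow_sub_q hi, neg_one_pow_sub_q (show k + t ≤ m by omega)]
        have hmm : ((-1:ℚ))^m * (-1)^m = 1 := by rw [← mul_pow]; norm_num
        calc ((-1:ℚ)^m * (-1)^i * (i.choose (k+t))) * ((-1)^m * (-1)^(k+t) * ((k+t).choose k))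
            = ((-1:ℚ)^m * (-1)^m) * ((-1)^i * (-1)^k * (-1)^t) *
              ((i.choose (k+t) : ℚ) * ((k+t).choose k)) := by rw [pow_add]; ring
          _ = ((-1:ℚ)^i * (-1)^k * (i.choose k)) * ((-1)^t * ((i-k).choose t)) := by
              rw [hmm, hc']; ring
      rw [Finset.sum_congr rfl hterm, ← Finset.mul_sum, alt_sum_q]
      rcases eq_or_lt_of_le hki with heq | hlt
      · subst heq
        simp [← mul_pow]
      · rw [if_neg (by omega), if_neg (by omega), mul_zero]
    · simp only [Finset.mem_range, Finset.mem_Ico, not_and, not_lt] at hj hj2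
      rcases lt_or_ge j k with h1 | h1
      · have : j.choose k = 0 := Nat.choose_eq_zero_of_lt h1
        simp [this]
      · have : i.choose j = 0 := Nat.choose_eq_zero_of_lt (by omega)
        simp [this]

theorem test (m : ℕ) :
    (Matrix.of (fun i j : Fin (m + 1) =>
          (-1 : ℚ) ^ (m - (i : ℕ)) * ((i : ℕ).choose (j : ℕ)))) *
    (Matrix.of (fun i j : Fin (m + 1) =>
          (-1 : ℚ) ^ (m - (i : ℕ)) * ((i : ℕ).choose (j : ℕ)))) = 1 := by
  ext i k
  rw [Matrix.mul_apply, Matrix.one_apply]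
  have := binom_inv m i k (by omega)
  rw [← Fin.sum_univ_eq_sum_range
    (fun j => ((-1:ℚ)^(m-(i:ℕ)) * ((i:ℕ).choose j)) * ((-1:ℚ)^(m-j) * (j.choose (k:ℕ)))) (m+1)] at this
  simp only [Matrix.of_apply]
  rw [this]
  congr 1
  simp [Fin.ext_iff, eq_comm]


/-- `I(m) - D(m)` is lower triangular, has rank `⌊(m+1)/2⌋`, and its eigenvalues
(the spectrum) are `0` and `2`. -/
theorem I_sub_D_properties (m : ℕ) (hm : 2 ≤ m) :
    (∀ i j : Fin (m + 1), (i : ℕ) < j →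
      ((1 : Matrix (Fin (m + 1)) (Fin (m + 1)) ℚ) -
        Matrix.of (fun i j : Fin (m + 1) =>
          (-1 : ℚ) ^ (m - (i : ℕ)) * ((i : ℕ).choose (j : ℕ)))) i j = 0) ∧
    ((1 : Matrix (Fin (m + 1)) (Fin (m + 1)) ℚ) -
        Matrix.of (fun i j : Fin (m + 1) =>
          (-1 : ℚ) ^ (m - (i : ℕ)) * ((i : ℕ).choose (j : ℕ)))).rank = (m + 1) / 2 ∧
    spectrum ℚ
      ((1 : Matrix (Fin (m + 1)) (Fin (m + 1)) ℚ) -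
        Matrix.of (fun i j : Fin (m + 1) =>
          (-1 : ℚ) ^ (m - (i : ℕ)) * ((i : ℕ).choose (j : ℕ)))) = {0, 2} := by
  set D : Matrix (Fin (m + 1)) (Fin (m + 1)) ℚ :=
    Matrix.of (fun i j : Fin (m + 1) =>
      (-1 : ℚ) ^ (m - (i : ℕ)) * ((i : ℕ).choose (j : ℕ))) with hD
  set M : Matrix (Fin (m + 1)) (Fin (m + 1)) ℚ := 1 - D with hMdef
  have hDD : D * D = 1 := test m
  -- triangularity
  have htri : ∀ i j : Fin (m + 1), (i : ℕ) < j → M i j = 0 := by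
    intro i j hij
    have hne : i ≠ j := fun h => by simp [h] at hij
    have hc : (i : ℕ).choose (j : ℕ) = 0 := Nat.choose_eq_zero_of_lt hij
    simp [hMdef, hD, Matrix.sub_apply, Matrix.one_apply_ne hne, hc]
  have hMM : M * M = (2:ℚ) • M := by
    have h1 : M * M = 1 - D - D + D * D := by rw [hMdef]; noncomm_ring
    rw [h1, hDD, hMdef, two_smul]
    abel
  refine ⟨htri, ?_, ?_⟩
  · -- rank
    set P : Matrix (Fin (m + 1)) (Fin (m + 1)) ℚ := (2⁻¹ : ℚ) • M with hPdef
    have hPP : P * P = P := by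
      rw [hPdef, smul_mul_smul_comm, hMM, smul_smul]
      norm_num
    set f := P.mulVecLin with hfdef
    have hf : f ∘ₗ f = f := by rw [hfdef, ← Matrix.mulVecLin_mul, hPP]
    obtain ⟨p, hp⟩ := (LinearMap.isProj_iff_isIdempotentElem f).mpr hf
    have hpr : LinearMap.range f = p := by
      apply le_antisymm
      · rintro x ⟨y, rfl⟩; exact hp.map_mem y
      · intro x hx; exact ⟨x, hp.map_id x hx⟩
    have ht := hp.trace
    have htr : LinearMap.trace ℚ _ f = Matrix.trace P := by
      rw [LinearMap.trace_eq_matrix_trace ℚ (Pi.basisFun ℚ (Fin (m+1))) f,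
        LinearMap.toMatrix_eq_toMatrix', hfdef, ← Matrix.toLin'_apply',
        LinearMap.toMatrix'_toLin']
    have hsum : ∑ i : Fin (m+1), (-1:ℚ)^(m - (i:ℕ)) = if Even (m+1) then 0 else 1 := by
      rw [Fin.sum_univ_eq_sum_range (fun j => (-1:ℚ)^(m-j)) (m+1)]
      have hre := Finset.sum_range_reflect (fun j => (-1:ℚ)^j) (m+1)
      simp only [Nat.add_sub_cancel] at hre
      rw [← neg_one_geom_sum (n := m+1), ← hre]
    have htrD : Matrix.trace D = if Even (m+1) then 0 else 1 := by
      rw [← hsum]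
      simp [Matrix.trace, Matrix.diag, hD]
    have htrP : Matrix.trace P = (2⁻¹:ℚ) * ((m+1) - (if Even (m+1) then 0 else 1)) := by
      rw [hPdef, Matrix.trace_smul, hMdef, Matrix.trace_sub, Matrix.trace_one, htrD]
      simp [smul_eq_mul]
    have hval : Matrix.trace P = (((m+1)/2 : ℕ) : ℚ) := by
      rw [htrP]
      rcases Nat.even_or_odd m with he | ho
      · obtain ⟨a, ha⟩ := he
        have h1 : ¬ Even (m+1) := by simp [Nat.even_add_one]; exact ⟨a, ha⟩
        rw [if_neg h1]
        have h2 : (m+1)/2 = a := by omega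
        rw [h2, ha]; push_cast; ring
      · obtain ⟨a, ha⟩ := ho
        have h1 : Even (m+1) := by rw [ha]; exact ⟨a+1, by ring⟩
        rw [if_pos h1]
        have h2 : (m+1)/2 = a+1 := by omega
        rw [h2, ha]; push_cast; ring
    have hfin : Module.finrank ℚ p = (m+1)/2 := by
      have : ((Module.finrank ℚ p : ℚ)) = (((m+1)/2 : ℕ) : ℚ) := by
        rw [← ht, htr, hval]
      exact_mod_cast this
    have hrange : LinearMap.range M.mulVecLin = LinearMap.range f := by
      have hsmul : P.mulVecLin = (2⁻¹:ℚ) • M.mulVecLin := by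
        ext v
        simp [hPdef, Matrix.mulVecLin_apply, Matrix.smul_mulVec]
      rw [hfdef, hsmul, LinearMap.range_smul _ _ (by norm_num : (2⁻¹:ℚ) ≠ 0)]
    rw [Matrix.rank, hrange, hpr, hfin]
  · -- spectrum
    have hnz : (0:ℚ) ∈ spectrum ℚ M := by
      rw [spectrum.mem_iff]
      intro hu
      rw [map_zero, zero_sub] at hu
      have := (Matrix.isUnit_iff_isUnit_det _).mp hu
      have hdetM : M.det = 0 := by
        rw [Matrix.det_of_lowerTriangular M (fun i j h => htri i j h)]
        apply Finset.prod_eq_zero (Finset.mem_univ (Fin.last m))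
        simp [hMdef, hD, Matrix.sub_apply, Matrix.one_apply, Fin.last, Nat.sub_self]
      rw [Matrix.det_neg, hdetM, mul_zero] at this
      exact this.ne_zero rfl
    have htwo : (2:ℚ) ∈ spectrum ℚ M := by
      rw [spectrum.mem_iff]
      intro hu
      have := (Matrix.isUnit_iff_isUnit_det _).mp hu
      set Y := algebraMap ℚ (Matrix (Fin (m+1)) (Fin (m+1)) ℚ) 2 - M with hY
      have hYtri : ∀ i j : Fin (m+1), (i:ℕ) < j → Y i j = 0 := by
        intro i j hij
        have hne : i ≠ j := fun h => by simp [h] at hij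
        rw [hY, Matrix.sub_apply, htri i j hij, Matrix.algebraMap_matrix_apply, if_neg hne,
          sub_zero]
      have hdetY : Y.det = 0 := by
        rw [Matrix.det_of_lowerTriangular Y (fun i j h => hYtri i j h)]
        have hmem : (⟨m-1, by omega⟩ : Fin (m+1)) ∈ Finset.univ := Finset.mem_univ _
        apply Finset.prod_eq_zero hmem
        have h1 : m - (m-1) = 1 := by omega
        simp [hY, hMdef, hD, Matrix.sub_apply, Matrix.one_apply, Matrix.algebraMap_matrix_apply,
          h1]
        norm_num
      rw [hdetY] at this
      exact this.ne_zero rfl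
    apply le_antisymm
    · intro k hk
      have h1 := spectrum.subset_polynomial_aeval M (Polynomial.X * Polynomial.X
        - Polynomial.C 2 * Polynomial.X : Polynomial ℚ)
      have h2 : Polynomial.aeval M (Polynomial.X * Polynomial.X
          - Polynomial.C 2 * Polynomial.X : Polynomial ℚ) = 0 := by
        simp only [map_sub, _root_.map_mul, Polynomial.aeval_X, Polynomial.aeval_C]
        rw [hMM, Algebra.smul_def]
        exact sub_self _
      have h3 : Polynomial.eval k (Polynomial.X * Polynomial.X
          - Polynomial.C 2 * Polynomial.X : Polynomial ℚ) ∈ spectrum ℚ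
          ((0 : Matrix (Fin (m+1)) (Fin (m+1)) ℚ)) := by
        rw [← h2]
        exact h1 ⟨k, hk, rfl⟩
      rw [spectrum.zero_eq] at h3
      simp only [Polynomial.eval_sub, Polynomial.eval_mul, Polynomial.eval_X,
        Polynomial.eval_C, Set.mem_singleton_iff] at h3
      have : k * (k - 2) = 0 := by linarith [h3]
      rcases mul_eq_zero.mp this with h | h
      · left; exact h
      · right; simp; linarith
    · intro k hk
      rcases hk with h | h
      · rw [h]; exact hnz
      · rw [Set.mem_singleton_iff] at h; rw [h]; exact htwo
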